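/- Let ν be an M×N real matrix of rank M, K = N − M, R an N×M real matrix, c¹,…,c^K a basis of ker ν assembled into the N×K matrix C, and A = [R | C]. Suppose Γ₁ ⊂ Γ₂ ⊂ … ⊂ Γ_L is a nested sequence of buffering structures: there are increasing chains of subsets 𝔪₁ ⊆ … ⊆ 𝔪_L = {1,…,M} (chemicals), 𝔫₁ ⊆ … ⊆ 𝔫_L = {1,…,N} (reactions), and I₁ ⊆ … ⊆ I_L = {1,…,K} (kernel indices) such that for each s: (i) R(n,m) = 0 for every m ∈ 𝔪_s and n ∉ 𝔫_s; (ii) c^α(n) = 0 for every α ∈ I_s and n ∉ 𝔫_s; and (iii) |𝔪_s| + |I_s| = |𝔫_s|. For s = 1,…,L−1 let A_{Γ_{s+1}∖Γ_s} be the submatrix of A with rows 𝔫_{s+1}∖𝔫_s and columns (𝔪_{s+1}∖𝔪_s) ∪ (I_{s+1}∖I_s), and let A_{Γ₁} be the submatrix with rows 𝔫₁ and columns 𝔪₁ ∪ I₁. Then |det(A)| = |det(A_{Γ₁})| · ∏_{s=1}^{L−1} |det(A_{Γ_{s+1}∖Γ_s})|. -/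

import Mathlib

open Matrix

/-- The square `N × N` matrix obtained by placing the columns of an `N × M` matrix `X`
before the columns of an `N × K` matrix `Y`, given `M + K = N`. -/
noncomputable def catCols {N M K : ℕ} (h : M + K = N)
    (X : Matrix (Fin N) (Fin M) ℝ) (Y : Matrix (Fin N) (Fin K) ℝ) :
    Matrix (Fin N) (Fin N) ℝ :=
  (Matrix.fromCols X Y).submatrix id (fun j => finSumFinEquiv.symm (Fin.cast h.symm j))

/-- The submatrix of the augmented matrix `[R | C]` with rows restricted to the reactions
satisfying `Pn` and columns restricted to the chemicals satisfying `Pm` together with the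
kernel columns satisfying `Pk`. -/
def subBlock {M N K : ℕ} (R : Matrix (Fin N) (Fin M) ℝ) (C : Matrix (Fin N) (Fin K) ℝ)
    (Pn : Fin N → Prop) (Pm : Fin M → Prop) (Pk : Fin K → Prop) :
    Matrix {n // Pn n} ({m // Pm m} ⊕ {α // Pk α}) ℝ :=
  Matrix.fromCols (R.submatrix (fun i => i.1) (fun j => j.1))
    (C.submatrix (fun i => i.1) (fun j => j.1))


section chainHelpers

variable {L : ℕ} {X : Type*} [DecidableEq X] {F : Fin (L + 1) → Finset X}

lemma chain_exists (hmono : Monotone F) (hF0 : F 0 = ∅) {x : X}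
    (hx : x ∈ F (Fin.last L)) : ∃ t : Fin L, x ∈ F t.succ \ F t.castSucc := by
  classical
  set S : Finset (Fin (L + 1)) := Finset.univ.filter (fun s => x ∈ F s) with hS
  have hSne : S.Nonempty := ⟨Fin.last L, by simp [hS, hx]⟩
  set s₀ := S.min' hSne with hs0
  have hmem : x ∈ F s₀ := by
    have := S.min'_mem hSne
    simpa [hS] using this
  have h0 : s₀ ≠ 0 := by
    intro h
    rw [h, hF0] at hmem
    exact absurd hmem (Finset.notMem_empty x)
  refine ⟨s₀.pred h0, Finset.mem_sdiff.2 ⟨?_, ?_⟩⟩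
  · rw [Fin.succ_pred]; exact hmem
  · intro hc
    have hmemS : (s₀.pred h0).castSucc ∈ S := by simp [hS, hc]
    have hle := S.min'_le _ hmemS
    have hlt : (s₀.pred h0).castSucc < s₀ := by
      conv_rhs => rw [← Fin.succ_pred s₀ h0]
      exact Fin.castSucc_lt_succ
    exact absurd hle (not_le.2 hlt)

lemma chain_uniq (hmono : Monotone F) {x : X} {s t : Fin L}
    (hs : x ∈ F s.succ \ F s.castSucc) (ht : x ∈ F t.succ \ F t.castSucc) : s = t := by
  rw [Finset.mem_sdiff] at hs ht
  rcases lt_trichotomy s t with h | h | h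
  · exfalso
    have hle : s.succ ≤ t.castSucc := by
      rw [Fin.le_def]; rw [Fin.lt_def] at h; simp; omega
    exact ht.2 (hmono hle hs.1)
  · exact h
  · exfalso
    have hle : t.succ ≤ s.castSucc := by
      rw [Fin.le_def]; rw [Fin.lt_def] at h; simp; omega
    exact hs.2 (hmono hle ht.1)

end chainHelpers

theorem statement10 {M N K L : ℕ} (hK : M + K = N)
    (ν : Matrix (Fin M) (Fin N) ℝ) (hrank : ν.rank = M)
    (R : Matrix (Fin N) (Fin M) ℝ) (C : Matrix (Fin N) (Fin K) ℝ)
    (hC : ∃ b : Module.Basis (Fin K) ℝ (LinearMap.ker ν.mulVecLin),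
        ∀ k n, (b k).1 n = C n k)
    (𝔪 : Fin (L + 1) → Finset (Fin M)) (𝔫 : Fin (L + 1) → Finset (Fin N))
    (I : Fin (L + 1) → Finset (Fin K))
    (hm0 : 𝔪 0 = ∅) (hn0 : 𝔫 0 = ∅) (hI0 : I 0 = ∅)
    (hmL : 𝔪 (Fin.last L) = Finset.univ) (hnL : 𝔫 (Fin.last L) = Finset.univ)
    (hIL : I (Fin.last L) = Finset.univ)
    (hmmono : Monotone 𝔪) (hnmono : Monotone 𝔫) (hImono : Monotone I)
    (h1 : ∀ s, ∀ m ∈ 𝔪 s, ∀ n ∉ 𝔫 s, R n m = 0)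
    (h2 : ∀ s, ∀ α ∈ I s, ∀ n ∉ 𝔫 s, C n α = 0)
    (h3 : ∀ s, (𝔪 s).card + (I s).card = (𝔫 s).card)
    (e : ∀ s : Fin L, {n // n ∈ 𝔫 s.succ \ 𝔫 s.castSucc} ≃
        ({m // m ∈ 𝔪 s.succ \ 𝔪 s.castSucc} ⊕ {α // α ∈ I s.succ \ I s.castSucc})) :
    |(catCols hK R C).det| =
      ∏ s : Fin L,
        |((subBlock R C (· ∈ 𝔫 s.succ \ 𝔫 s.castSucc) (· ∈ 𝔪 s.succ \ 𝔪 s.castSucc)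
            (· ∈ I s.succ \ I s.castSucc)).submatrix id (e s)).det| := by
  classical
  have hbn : ∀ n : Fin N, ∃ t : Fin L, n ∈ 𝔫 t.succ \ 𝔫 t.castSucc :=
    fun n => chain_exists hnmono hn0 (by simp [hnL])
  have hbm : ∀ m : Fin M, ∃ t : Fin L, m ∈ 𝔪 t.succ \ 𝔪 t.castSucc :=
    fun m => chain_exists hmmono hm0 (by simp [hmL])
  have hbI : ∀ α : Fin K, ∃ t : Fin L, α ∈ I t.succ \ I t.castSucc :=
    fun α => chain_exists hImono hI0 (by simp [hIL])
  choose bn bn_mem using hbn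
  choose bm bm_mem using hbm
  choose bI bI_mem using hbI
  have bn_eq : ∀ n t, n ∈ 𝔫 t.succ \ 𝔫 t.castSucc → bn n = t :=
    fun n t h => chain_uniq hnmono (bn_mem n) h
  have bm_eq : ∀ m t, m ∈ 𝔪 t.succ \ 𝔪 t.castSucc → bm m = t :=
    fun m t h => chain_uniq hmmono (bm_mem m) h
  have bI_eq : ∀ α t, α ∈ I t.succ \ I t.castSucc → bI α = t :=
    fun α t h => chain_uniq hImono (bI_mem α) h
  set g : Fin N → Fin M ⊕ Fin K :=
    fun n => Sum.map Subtype.val Subtype.val ((e (bn n)) ⟨n, bn_mem n⟩) with hg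
  have g_spec : ∀ (n : Fin N) (t : Fin L) (h : n ∈ 𝔫 t.succ \ 𝔫 t.castSucc),
      g n = Sum.map Subtype.val Subtype.val ((e t) ⟨n, h⟩) := by
    intro n t h
    have ht := bn_eq n t h
    subst ht
    rfl
  have gsurj : Function.Surjective g := by
    rintro (m | α)
    · refine ⟨((e (bm m)).symm (Sum.inl ⟨m, bm_mem m⟩)).1, ?_⟩
      rw [g_spec _ (bm m) ((e (bm m)).symm (Sum.inl ⟨m, bm_mem m⟩)).2]
      rw [Subtype.eta, Equiv.apply_symm_apply]
      rfl
    · refine ⟨((e (bI α)).symm (Sum.inr ⟨α, bI_mem α⟩)).1, ?_⟩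
      rw [g_spec _ (bI α) ((e (bI α)).symm (Sum.inr ⟨α, bI_mem α⟩)).2]
      rw [Subtype.eta, Equiv.apply_symm_apply]
      rfl
  have gbij : Function.Bijective g := by
    rw [Fintype.bijective_iff_surjective_and_card]
    exact ⟨gsurj, by simp [hK]⟩
  set gE : Fin N ≃ (Fin M ⊕ Fin K) := Equiv.ofBijective g gbij with hgE
  set cE : Fin N ≃ (Fin M ⊕ Fin K) := (finCongr hK.symm).trans finSumFinEquiv.symm with hcE
  set B : Matrix (Fin N) (Fin N) ℝ := (Matrix.fromCols R C).submatrix id g with hB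
  have hBcat : B = (catCols hK R C).submatrix (Equiv.refl (Fin N)) (gE.trans cE.symm) := by
    ext i j
    simp only [hB, catCols, Matrix.submatrix_apply, Equiv.refl_apply, Equiv.trans_apply, id]
    congr 1
    have : ∀ x : Fin M ⊕ Fin K, finSumFinEquiv.symm (Fin.cast hK.symm (cE.symm x)) = x := by
      intro x
      have := cE.apply_symm_apply x
      simpa [hcE, finCongr] using this
    rw [this (gE j)]
    rfl
  have habs : |(catCols hK R C).det| = |B.det| := by
    rw [hBcat, Matrix.abs_det_submatrix_equiv_equiv]
  have hBT : B.BlockTriangular bn := by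
    intro i j hij
    have hj := bn_mem j
    rcases hej : (e (bn j)) ⟨j, hj⟩ with ⟨m, hm⟩ | ⟨α, hα⟩
    · have hBij : B i j = R i m := by
        simp [hB, hg, hej, Matrix.fromCols]
      rw [hBij]
      refine h1 (bn i).castSucc m ?_ i ?_
      · have hle : (bn j).succ ≤ (bn i).castSucc := by
          rw [Fin.le_def]; rw [Fin.lt_def] at hij; simp; omega
        exact hmmono hle (Finset.mem_sdiff.1 hm).1
      · exact (Finset.mem_sdiff.1 (bn_mem i)).2
    · have hBij : B i j = C i α := by
        simp [hB, hg, hej, Matrix.fromCols]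
      rw [hBij]
      refine h2 (bn i).castSucc α ?_ i ?_
      · have hle : (bn j).succ ≤ (bn i).castSucc := by
          rw [Fin.le_def]; rw [Fin.lt_def] at hij; simp; omega
        exact hImono hle (Finset.mem_sdiff.1 hα).1
      · exact (Finset.mem_sdiff.1 (bn_mem i)).2
  have hblock : ∀ t : Fin L,
      ((subBlock R C (· ∈ 𝔫 t.succ \ 𝔫 t.castSucc) (· ∈ 𝔪 t.succ \ 𝔪 t.castSucc)
          (· ∈ I t.succ \ I t.castSucc)).submatrix id (e t)).det
        = (B.toSquareBlock bn t).det := by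
    intro t
    have hiff : ∀ n : Fin N, n ∈ 𝔫 t.succ \ 𝔫 t.castSucc ↔ bn n = t :=
      fun n => ⟨fun h => bn_eq n t h, fun h => h ▸ bn_mem n⟩
    let φ : {n // n ∈ 𝔫 t.succ \ 𝔫 t.castSucc} ≃ {n // bn n = t} :=
      Equiv.subtypeEquivRight hiff
    rw [← Matrix.det_submatrix_equiv_self φ (B.toSquareBlock bn t)]
    congr 1
    ext i j
    have hj : (j : Fin N) ∈ 𝔫 t.succ \ 𝔫 t.castSucc := j.2
    have hgj : g j = Sum.map Subtype.val Subtype.val ((e t) ⟨(j : Fin N), hj⟩) :=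
      g_spec j t hj
    have hjeta : (⟨(j : Fin N), hj⟩ : {n // n ∈ 𝔫 t.succ \ 𝔫 t.castSucc}) = j :=
      Subtype.eta _ _
    rcases hej : (e t) j with ⟨m, hm⟩ | ⟨α, hα⟩
    · have : g j = Sum.inl m := by rw [hgj, hjeta, hej]; rfl
      simp [subBlock, Matrix.toSquareBlock, Matrix.toSquareBlockProp, hB, hej, this, φ,
        Matrix.fromCols, Equiv.subtypeEquivRight]
      change _ = Sum.elim (R i) (C i) (g j)
      rw [this]; rfl
    · have : g j = Sum.inr α := by rw [hgj, hjeta, hej]; rfl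
      simp [subBlock, Matrix.toSquareBlock, Matrix.toSquareBlockProp, hB, hej, this, φ,
        Matrix.fromCols, Equiv.subtypeEquivRight]
      change _ = Sum.elim (R i) (C i) (g j)
      rw [this]; rfl
  calc |(catCols hK R C).det| = |B.det| := habs
    _ = |∏ t : Fin L, (B.toSquareBlock bn t).det| := by rw [hBT.det_fintype]
    _ = ∏ t : Fin L, |(B.toSquareBlock bn t).det| := Finset.abs_prod _ _
    _ = _ := by
        refine Finset.prod_congr rfl fun t _ => ?_
        rw [hblock t]
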